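/- In the setting of the previous equivariance identity (integers ⟨u_j,q_i⟩, ⟨p_l,v_j⟩ with ∑_{j=1}^n ⟨p_l,v_j⟩⟨u_j,q_i⟩ = 0 for all l, i, and the polynomial maps f_i(z) = ∏_{j∈I⁺_i} z_j^{⟨u_j,q_i⟩} − e^{⟨a,q_i⟩} ∏_{j∈I⁻_i} z_j^{−⟨u_j,q_i⟩}), let Df(z) denote the (n−k)×n complex Jacobian matrix (∂f_i/∂z_j(z)). Then for every t = (t_1,…,t_k) with |t_l| = 1 and every z ∈ ℂ^n: Df(i_V(t)·z) = 𝒯(t) · Df(z) · 𝒯_V(t), where 𝒯(t) is the diagonal matrix with entries 𝒯_i(t) = ∏_{j∈I⁻_i} ∏_{l=1}^k t_l^{−⟨p_l,v_j⟩⟨u_j,q_i⟩} (i = k+1,…,n) and 𝒯_V(t) is the diagonal matrix with entries ∏_{l=1}^k t_l^{−⟨p_l,v_j⟩} (j = 1,…,n). In particular, the rank of Df(i_V(t)·z) equals the rank of Df(z) for all such t and z. -/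

import Mathlib

open Finset

private lemma zpow_sum_aux {ι : Type*} {t : ℂ} (ht : t ≠ 0) (s : Finset ι) (g : ι → ℤ) :
    ∏ i ∈ s, t ^ g i = t ^ ∑ i ∈ s, g i := by
  induction s using Finset.cons_induction with
  | empty => simp
  | cons a s ha ih => rw [Finset.prod_cons, Finset.sum_cons, zpow_add₀ ht, ih]

private lemma diff_prod_aux {n : ℕ} (s : Finset (Fin n)) (N : Fin n → ℕ) :
    Differentiable ℂ (fun w : Fin n → ℂ => ∏ j ∈ s, w j ^ N j) := by
  induction s using Finset.cons_induction with
  | empty => simpa using differentiable_const (1 : ℂ)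
  | cons a s ha ih =>
      simp only [Finset.prod_cons]
      exact (((ContinuousLinearMap.proj (R := ℂ) (φ := fun _ : Fin n => ℂ)
        a).differentiable).pow _).mul ih

/-- `T^k`-equivariance of the Jacobian matrix of the defining equations:
`Df (i_V(t)·z) = 𝒯(t) * Df(z) * 𝒯_V(t)` with `𝒯(t)`, `𝒯_V(t)` invertible diagonal matrices;
in particular `rank Df (i_V(t)·z) = rank Df z`. -/
theorem stmt4 (n k : ℕ)
    (u : Fin n → Fin n → ℤ) (q : Fin (n - k) → Fin n → ℤ)
    (a : Fin n → ℝ) (p : Fin k → Fin n → ℤ) (v : Fin n → Fin n → ℤ)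
    (hsum : ∀ (l : Fin k) (i : Fin (n - k)),
      ∑ j, (∑ m, p l m * v j m) * (∑ m, u j m * q i m) = 0)
    (f : Fin (n - k) → (Fin n → ℂ) → ℂ)
    (hf : ∀ i z, f i z =
      (∏ j ∈ univ.filter fun j => 0 ≤ ∑ m, u j m * q i m,
        z j ^ (∑ m, u j m * q i m).toNat)
      - (Real.exp (∑ m, a m * (q i m : ℝ)) : ℂ) *
        ∏ j ∈ univ.filter fun j => (∑ m, u j m * q i m) ≤ 0,
          z j ^ (-∑ m, u j m * q i m).toNat)
    (Df : (Fin n → ℂ) → Matrix (Fin (n - k)) (Fin n) ℂ)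
    (hDf : ∀ z, Df z = Matrix.of fun i j => fderiv ℂ (f i) z (Pi.single j 1))
    (t : Fin k → ℂ) (ht : ∀ l, ‖t l‖ = 1) (z : Fin n → ℂ) :
    Df (fun j => (∏ l, t l ^ (∑ m, p l m * v j m)) * z j)
      = Matrix.diagonal (fun i => ∏ j ∈ univ.filter fun j => (∑ m, u j m * q i m) ≤ 0,
           ∏ l, t l ^ (-(∑ m, p l m * v j m) * (∑ m, u j m * q i m)))
        * Df z
        * Matrix.diagonal (fun j => ∏ l, t l ^ (-(∑ m, p l m * v j m))) ∧
    (Df (fun j => (∏ l, t l ^ (∑ m, p l m * v j m)) * z j)).rank = (Df z).rank := by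
  have ht0 : ∀ l, t l ≠ 0 := by
    intro l h
    have := ht l
    rw [h] at this
    simpa using this
  set A : Fin (n - k) → Fin n → ℤ := fun i j => ∑ m, u j m * q i m with hAdef
  set e : Fin k → Fin n → ℤ := fun l j => ∑ m, p l m * v j m with hedef
  set c : Fin n → ℂ := fun j => ∏ l, t l ^ e l j with hcdef
  set lam : Fin (n - k) → ℂ := fun i =>
    ∏ j ∈ univ.filter fun j => A i j ≤ 0, ∏ l, t l ^ (-(e l j) * A i j) with hlamdef
  have hc0 : ∀ j, c j ≠ 0 := fun j =>
    Finset.prod_ne_zero_iff.2 fun l _ => zpow_ne_zero _ (ht0 l)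
  have hlam0 : ∀ i, lam i ≠ 0 := fun i =>
    Finset.prod_ne_zero_iff.2 fun j _ =>
      Finset.prod_ne_zero_iff.2 fun l _ => zpow_ne_zero _ (ht0 l)
  -- exponent identity
  have hexp : ∀ (l : Fin k) (i : Fin (n - k)),
      ∑ j ∈ univ.filter fun j => 0 ≤ A i j, e l j * A i j
        = ∑ j ∈ univ.filter fun j => A i j ≤ 0, -(e l j) * A i j := by
    intro l i
    have h0 := hsum l i
    have hsplit : (∑ j ∈ univ.filter fun j => 0 ≤ A i j, e l j * A i j)
        + ∑ j ∈ univ.filter fun j => ¬ 0 ≤ A i j, e l j * A i j = 0 := by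
      rw [Finset.sum_filter_add_sum_filter_not]
      exact h0
    have hneg : (∑ j ∈ univ.filter fun j => A i j ≤ 0, e l j * A i j)
        = ∑ j ∈ univ.filter fun j => ¬ 0 ≤ A i j, e l j * A i j := by
      refine (Finset.sum_subset ?_ ?_).symm
      · intro j hj
        simp only [Finset.mem_filter, Finset.mem_univ, true_and] at hj ⊢
        omega
      · intro j hj hj'
        simp only [Finset.mem_filter, Finset.mem_univ, true_and] at hj hj'
        have : A i j = 0 := by omega
        simp [this]
    have h2 : (∑ j ∈ univ.filter fun j => A i j ≤ 0, -(e l j) * A i j)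
        = -∑ j ∈ univ.filter fun j => A i j ≤ 0, e l j * A i j := by
      rw [← Finset.sum_neg_distrib]
      exact Finset.sum_congr rfl fun j _ => by ring
    rw [h2, hneg]
    omega
  -- scaling identity for f i
  have hscale : ∀ (i : Fin (n - k)) (w : Fin n → ℂ),
      f i (fun j => c j * w j) = lam i * f i w := by
    intro i w
    rw [hf i, hf i]
    have hplus : (∏ j ∈ univ.filter fun j => 0 ≤ A i j, c j ^ (A i j).toNat) = lam i := by
      have step : ∀ j ∈ univ.filter fun j => 0 ≤ A i j,
          c j ^ (A i j).toNat = ∏ l, t l ^ (e l j * A i j) := by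
        intro j hj
        simp only [Finset.mem_filter, Finset.mem_univ, true_and] at hj
        rw [hcdef]
        rw [← Finset.prod_pow]
        refine Finset.prod_congr rfl fun l _ => ?_
        rw [← zpow_natCast (t l ^ e l j) ((A i j).toNat), ← zpow_mul,
          Int.toNat_of_nonneg hj]
      rw [Finset.prod_congr rfl step, Finset.prod_comm]
      have stepl : ∀ l ∈ (univ : Finset (Fin k)),
          (∏ j ∈ univ.filter fun j => 0 ≤ A i j, t l ^ (e l j * A i j))
            = t l ^ (∑ j ∈ univ.filter fun j => A i j ≤ 0, -(e l j) * A i j) := by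
        intro l _
        rw [zpow_sum_aux (ht0 l), hexp l i]
      rw [Finset.prod_congr rfl stepl]
      simp only [hlamdef]
      rw [Finset.prod_comm]
      exact Finset.prod_congr rfl fun l _ => (zpow_sum_aux (ht0 l) _ _).symm
    have hminus : (∏ j ∈ univ.filter fun j => A i j ≤ 0, c j ^ (-A i j).toNat) = lam i := by
      simp only [hlamdef]
      refine Finset.prod_congr rfl fun j hj => ?_
      simp only [Finset.mem_filter, Finset.mem_univ, true_and] at hj
      rw [hcdef, ← Finset.prod_pow]
      refine Finset.prod_congr rfl fun l _ => ?_
      rw [← zpow_natCast (t l ^ e l j) ((-A i j).toNat), ← zpow_mul,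
        Int.toNat_of_nonneg (by omega : (0:ℤ) ≤ -A i j)]
      ring_nf
    calc (∏ j ∈ univ.filter fun j => 0 ≤ A i j, (c j * w j) ^ (A i j).toNat)
          - (Real.exp (∑ m, a m * (q i m : ℝ)) : ℂ)
            * ∏ j ∈ univ.filter fun j => A i j ≤ 0, (c j * w j) ^ (-A i j).toNat
        = (∏ j ∈ univ.filter fun j => 0 ≤ A i j, c j ^ (A i j).toNat)
            * (∏ j ∈ univ.filter fun j => 0 ≤ A i j, w j ^ (A i j).toNat)
          - (Real.exp (∑ m, a m * (q i m : ℝ)) : ℂ)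
            * ((∏ j ∈ univ.filter fun j => A i j ≤ 0, c j ^ (-A i j).toNat)
              * ∏ j ∈ univ.filter fun j => A i j ≤ 0, w j ^ (-A i j).toNat) := by
          simp [mul_pow, Finset.prod_mul_distrib]
      _ = lam i * ((∏ j ∈ univ.filter fun j => 0 ≤ A i j, w j ^ (A i j).toNat)
          - (Real.exp (∑ m, a m * (q i m : ℝ)) : ℂ)
            * ∏ j ∈ univ.filter fun j => A i j ≤ 0, w j ^ (-A i j).toNat) := by
          rw [hplus, hminus]; ring
  -- differentiability
  have hdiff : ∀ i, Differentiable ℂ (f i) := by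
    intro i
    have : f i = fun w =>
        (∏ j ∈ univ.filter fun j => 0 ≤ A i j, w j ^ (A i j).toNat)
        - (Real.exp (∑ m, a m * (q i m : ℝ)) : ℂ) *
          ∏ j ∈ univ.filter fun j => A i j ≤ 0, w j ^ (-A i j).toNat := funext (hf i)
    rw [this]
    exact (diff_prod_aux _ _).sub ((diff_prod_aux _ _).const_mul _)
  -- the scaling continuous linear map
  set S : (Fin n → ℂ) →L[ℂ] (Fin n → ℂ) :=
    ContinuousLinearMap.pi (fun j => c j • ContinuousLinearMap.proj j) with hSdef
  have hSapp : ∀ w : Fin n → ℂ, S w = fun j => c j * w j := by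
    intro w; funext j; simp [hSdef]
  -- derivative identity
  have key : ∀ (i : Fin (n - k)) (j : Fin n),
      fderiv ℂ (f i) (fun j' => c j' * z j') (Pi.single j 1) * c j
        = lam i * fderiv ℂ (f i) z (Pi.single j 1) := by
    intro i j
    have hcomp : (fun w => f i (S w)) = fun w => lam i * f i w := by
      funext w
      rw [hSapp w, hscale i w]
    have h1 : fderiv ℂ (fun w => f i (S w)) z
        = (fderiv ℂ (f i) (S z)).comp (S : (Fin n → ℂ) →L[ℂ] (Fin n → ℂ)) := by
      have := fderiv_comp (𝕜 := ℂ) z ((hdiff i) (S z)) (S.differentiableAt)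
      rw [S.fderiv] at this
      exact this
    have h2 : fderiv ℂ (fun w => lam i * f i w) z = lam i • fderiv ℂ (f i) z :=
      fderiv_const_mul ((hdiff i) z) _
    have h3 : (fderiv ℂ (f i) (S z)).comp (S : (Fin n → ℂ) →L[ℂ] (Fin n → ℂ))
        = lam i • fderiv ℂ (f i) z := by
      rw [← h1, hcomp, h2]
    have h4 := DFunLike.congr_fun h3 (Pi.single j 1)
    have hsingle : S (Pi.single j 1) = c j • (Pi.single j 1 : Fin n → ℂ) := by
      rw [hSapp]
      funext m
      by_cases hm : m = j
      · subst hm; simp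
      · simp [Pi.single_eq_of_ne hm]
    simp only [ContinuousLinearMap.comp_apply, ContinuousLinearMap.smul_apply,
      smul_eq_mul] at h4
    rw [hsingle, map_smul, smul_eq_mul] at h4
    rw [hSapp] at h4
    linear_combination h4
  have hmain : Df (fun j => c j * z j)
      = Matrix.diagonal lam * Df z * Matrix.diagonal (fun j => (c j)⁻¹) := by
    ext i j
    rw [Matrix.mul_assoc, Matrix.diagonal_mul, Matrix.mul_diagonal]
    rw [hDf, hDf]
    simp only [Matrix.of_apply]
    rw [← mul_assoc, ← key i j, mul_inv_cancel_right₀ (hc0 j)]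
  have hcinv : ∀ j, (c j)⁻¹ = ∏ l, t l ^ (-(e l j)) := by
    intro j
    rw [hcdef]
    rw [← Finset.prod_inv_distrib]
    exact Finset.prod_congr rfl fun l _ => by rw [← zpow_neg]
  have hmain' : Df (fun j => c j * z j)
      = Matrix.diagonal lam * Df z * Matrix.diagonal (fun j => ∏ l, t l ^ (-(e l j))) := by
    rw [hmain]
    congr 1
    exact congrArg _ (funext hcinv)
  constructor
  · exact hmain'
  · rw [hmain']
    rw [Matrix.rank_mul_eq_left_of_isUnit_det, Matrix.rank_mul_eq_right_of_isUnit_det]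
    · rw [Matrix.det_diagonal]
      exact (Finset.prod_ne_zero_iff.2 fun i _ => hlam0 i).isUnit
    · rw [Matrix.det_diagonal]
      refine (Finset.prod_ne_zero_iff.2 fun j _ => ?_).isUnit
      exact Finset.prod_ne_zero_iff.2 fun l _ => zpow_ne_zero _ (ht0 l)
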